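/- Let V be a real vector space, ω : V → ℝ a linear functional, and v_1, …, v_ℓ ∈ V elements with ω(v_i) > 0 for every i; let M ⊆ V denote the additive submonoid generated by v_1, …, v_ℓ. Then the image ω(M) = {ω(x) : x ∈ M} is a closed subset of ℝ and is discrete (it has no accumulation point in ℝ). -/

import Mathlib

open Set Filter

/-- A subset of ℝ whose intersection with every `Iic R` is finite is closed. -/
lemma aux_closed {T : Set ℝ} (h : ∀ R : ℝ, (T ∩ Set.Iic R).Finite) :
    IsClosed T := by
  rw [← isOpen_compl_iff, isOpen_iff_mem_nhds]
  intro a ha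
  have hfin : (T ∩ Set.Icc (a - 1) (a + 1)).Finite :=
    (h (a + 1)).subset (fun x hx => ⟨hx.1, hx.2.2⟩)
  have hN : (T ∩ Set.Icc (a - 1) (a + 1))ᶜ ∩ Set.Ioo (a - 1) (a + 1) ∈ nhds a := by
    refine Filter.inter_mem ?_ (isOpen_Ioo.mem_nhds (by constructor <;> linarith))
    exact hfin.isClosed.isOpen_compl.mem_nhds (fun h => ha h.1)
  refine Filter.mem_of_superset hN ?_
  rintro x ⟨hx1, hx2⟩ hxT
  exact hx1 ⟨hxT, hx2.1.le, hx2.2.le⟩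

lemma aux_main {T : Set ℝ} (h : ∀ R : ℝ, (T ∩ Set.Iic R).Finite) :
    IsClosed T ∧ ∀ a : ℝ, ¬ AccPt a (Filter.principal T) := by
  refine ⟨aux_closed h, fun a hacc => ?_⟩
  have h' : ∀ R : ℝ, ((T \ {a}) ∩ Set.Iic R).Finite :=
    fun R => (h R).subset (fun x hx => ⟨hx.1.1, hx.2⟩)
  have hcl : a ∈ closure (T \ {a}) := by
    rw [mem_closure_iff_nhds]
    intro U hU
    obtain ⟨y, hy, hya⟩ := accPt_iff_nhds.1 hacc U hU
    exact ⟨y, hy.1, hy.2, hya⟩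
  rw [(aux_closed h').closure_eq] at hcl
  exact hcl.2 rfl

/-- For a linear functional `ω` on a real vector space and elements `v_1, …, v_ℓ`
with `ω (v i) > 0`, the image under `ω` of the additive submonoid generated by the
`v_i` is a closed subset of `ℝ` with no accumulation point. -/
theorem stmt3 {V : Type*} [AddCommGroup V] [Module ℝ V]
    (ω : V →ₗ[ℝ] ℝ) {ℓ : ℕ} (v : Fin ℓ → V) (hv : ∀ i, 0 < ω (v i))
    (M : AddSubmonoid V) (hM : M = AddSubmonoid.closure (Set.range v)) :
    IsClosed (⇑ω '' (M : Set V)) ∧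
      ∀ a : ℝ, ¬ AccPt a (Filter.principal (⇑ω '' (M : Set V))) := by
  set c : Fin ℓ → ℝ := fun i => ω (v i) with hc
  set f : (Fin ℓ → ℕ) → ℝ := fun n => ∑ i, (n i : ℝ) * c i with hf
  have himg : ⇑ω '' (M : Set V) = Set.range f := by
    apply Set.Subset.antisymm
    · rintro _ ⟨x, hx, rfl⟩
      rw [hM] at hx
      induction hx using AddSubmonoid.closure_induction with
      | mem y hy =>
        obtain ⟨i, rfl⟩ := hy
        refine ⟨Pi.single i 1, ?_⟩
        show ∑ j, ((Pi.single i 1 : Fin ℓ → ℕ) j : ℝ) * c j = ω (v i)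
        rw [Fintype.sum_eq_single i]
        · simp [hc]
        · intro j hj
          simp [Pi.single_eq_of_ne hj]
      | zero => exact ⟨0, by simp [hf]⟩
      | add x y hx hy ihx ihy =>
        obtain ⟨n, hn⟩ := ihx
        obtain ⟨m, hm⟩ := ihy
        refine ⟨n + m, ?_⟩
        rw [map_add, ← hn, ← hm]
        simp [hf, add_mul, Finset.sum_add_distrib]
    · rintro _ ⟨n, rfl⟩
      have hmem : (∑ i, n i • v i) ∈ M := by
        rw [hM]
        exact AddSubmonoid.sum_mem _ (fun i _ =>
          AddSubmonoid.nsmul_mem _ (AddSubmonoid.subset_closure (Set.mem_range_self i)) _)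
      refine ⟨∑ i, n i • v i, hmem, ?_⟩
      simp [hf, hc, map_sum, map_nsmul, nsmul_eq_mul]
  rw [himg]
  apply aux_main
  intro R
  have key : Set.range f ∩ Set.Iic R ⊆
      f '' (Set.pi Set.univ (fun i => Set.Iic (⌈R / c i⌉₊))) := by
    rintro _ ⟨⟨n, rfl⟩, hR⟩
    refine ⟨n, fun i _ => ?_, rfl⟩
    have hterm : (n i : ℝ) * c i ≤ f n := by
      apply Finset.single_le_sum (f := fun j => (n j : ℝ) * c j)
      · exact fun j _ => mul_nonneg (Nat.cast_nonneg _) (hv j).le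
      · exact Finset.mem_univ i
    have h1 : (n i : ℝ) ≤ R / c i := by
      rw [le_div_iff₀ (hv i)]
      exact hterm.trans hR
    have h2 : (n i : ℝ) ≤ (⌈R / c i⌉₊ : ℝ) := h1.trans (Nat.le_ceil _)
    exact_mod_cast h2
  exact ((Set.Finite.pi (fun i => Set.finite_Iic _)).image f).subset key
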